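/- Let k ≥ 2 and let p₁, …, p_k be a k-cap or a k-cup in ℝ². Then the set {p₁, …, p_k} admits a covering path consisting of ⌈k/2⌉ segments. -/

import Mathlib

noncomputable section

open scoped RealInnerProductSpace

/-- Points of the Euclidean plane. -/
abbrev Pt : Type := EuclideanSpace ℝ (Fin 2)

/-- The `i`-th closed segment of a polygonal path with vertices `v 0, …, v m`. -/
def pathSeg {m : ℕ} (v : Fin (m + 1) → Pt) (i : Fin m) : Set Pt :=
  segment ℝ (v i.castSucc) (v i.succ)

/-- `v 0, …, v m` is a covering path with `m` segments for `S`: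
every point of `S` lies on some segment of the path. -/
def IsCoveringPath (S : Set Pt) (m : ℕ) (v : Fin (m + 1) → Pt) : Prop :=
  ∀ p ∈ S, ∃ i : Fin m, p ∈ pathSeg v i

/-- The polygonal path with vertices `v 0, …, v m` is noncrossing (a simple arc):
consecutive segments meet exactly in their common vertex, and
non-consecutive segments are disjoint. -/
def IsNoncrossing (m : ℕ) (v : Fin (m + 1) → Pt) : Prop :=
  ∀ i j : Fin m, i < j →
    (((j : ℕ) = (i : ℕ) + 1) → pathSeg v i ∩ pathSeg v j = {v i.succ}) ∧
    (((i : ℕ) + 1 < (j : ℕ)) → pathSeg v i ∩ pathSeg v j = ∅)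

/-- `p 0, …, p (k-1)` is a `k`-cap: strictly increasing x-coordinates and
strictly decreasing slopes of consecutive segments. -/
def IsCap (k : ℕ) (p : ℕ → Pt) : Prop :=
  (∀ i j : ℕ, i < j → j < k → p i 0 < p j 0) ∧
  (∀ i : ℕ, i + 2 < k →
    (p (i + 2) 1 - p (i + 1) 1) / (p (i + 2) 0 - p (i + 1) 0) <
      (p (i + 1) 1 - p i 1) / (p (i + 1) 0 - p i 0))

/-- `p 0, …, p (k-1)` is a `k`-cup: strictly increasing x-coordinates and
strictly increasing slopes of consecutive segments. -/
def IsCup (k : ℕ) (p : ℕ → Pt) : Prop :=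
  (∀ i j : ℕ, i < j → j < k → p i 0 < p j 0) ∧
  (∀ i : ℕ, i + 2 < k →
    (p (i + 1) 1 - p i 1) / (p (i + 1) 0 - p i 0) <
      (p (i + 2) 1 - p (i + 1) 1) / (p (i + 2) 0 - p (i + 1) 0))

/- ## Auxiliary constructions -/
def mk2 (x y : ℝ) : Pt := WithLp.toLp 2 (fun j : Fin 2 => if j = 1 then y else x)

@[simp] lemma mk2_zero (x y : ℝ) : mk2 x y 0 = x := rfl
@[simp] lemma mk2_one (x y : ℝ) : mk2 x y 1 = y := rfl

lemma mem_seg {c sl : ℝ} {a b r : Pt}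
    (ha : a 1 = c + sl * a 0) (hb : b 1 = c + sl * b 0) (hr : r 1 = c + sl * r 0)
    (hab : a 0 < b 0) (h1 : a 0 ≤ r 0) (h2 : r 0 ≤ b 0) :
    r ∈ segment ℝ a b := by
  have hd : (0:ℝ) < b 0 - a 0 := by linarith
  set t := (r 0 - a 0) / (b 0 - a 0) with ht
  have ht0 : 0 ≤ t := div_nonneg (by linarith) hd.le
  have ht1 : t ≤ 1 := by rw [ht, div_le_one hd]; linarith
  have key : t * (b 0 - a 0) = r 0 - a 0 := div_mul_cancel₀ _ hd.ne'
  refine ⟨1 - t, t, by linarith, ht0, by ring, ?_⟩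
  ext j
  have happ : ((1-t) • a + t • b) j = (1-t) * a j + t * b j := rfl
  have hj : j = 0 ∨ j = 1 := by omega
  rcases hj with h | h <;> subst h <;> rw [happ]
  · linear_combination key
  · rw [ha, hb, hr]; linear_combination sl * key

lemma slope_anti {k : ℕ} {s : ℕ → ℝ} (hs : ∀ i, i + 2 < k → s (i+1) < s i) :
    ∀ i j, i < j → j + 1 < k → s j < s i := by
  intro i j hij hjk
  induction j with
  | zero => omega
  | succ n ih =>
    rcases Nat.lt_or_ge i n with h | h
    · exact (hs n (by omega)).trans (ih h (by omega))
    · have hin : i = n := by omega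
      subst hin; exact hs i (by omega)

def xc (p : ℕ → Pt) (i : ℕ) : ℝ := p i 0
def yc (p : ℕ → Pt) (i : ℕ) : ℝ := p i 1
def sl (p : ℕ → Pt) (i : ℕ) : ℝ := (yc p (i+1) - yc p i) / (xc p (i+1) - xc p i)

/-- intercept of the line `L i` through `p (2i)` and `p (2i+1)` -/
def lc (p : ℕ → Pt) (i : ℕ) : ℝ := yc p (2*i) - sl p (2*i) * xc p (2*i)

/-- x-coordinate of the intersection of `L i` and `L (i+1)` -/
def Xint (p : ℕ → Pt) (i : ℕ) : ℝ :=
  (yc p (2*i+2) - yc p (2*i+1) + sl p (2*i) * xc p (2*i+1) - sl p (2*i+2) * xc p (2*i+2))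
    / (sl p (2*i) - sl p (2*i+2))

def vert (p : ℕ → Pt) (m : ℕ) (i : ℕ) : Pt :=
  if i = 0 then p 0 else if i = m then p (2*m-1)
  else mk2 (Xint p (i-1)) (lc p i + sl p (2*i) * Xint p (i-1))

lemma cap_even (m : ℕ) (hm : 1 ≤ m) (p : ℕ → Pt) (hcap : IsCap (2*m) p) :
    ∃ v : Fin (m+1) → Pt, IsCoveringPath {q : Pt | ∃ i < 2*m, q = p i} m v := by
  obtain ⟨hx, hs0⟩ := hcap
  have hxlt : ∀ i j, i < j → j < 2*m → xc p i < xc p j := hx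
  have hslt : ∀ i j, i < j → j + 1 < 2*m → sl p j < sl p i :=
    slope_anti (fun i hi => hs0 i hi)
  have hΔ : ∀ i, i + 1 < 2*m → yc p (i+1) - yc p i = sl p i * (xc p (i+1) - xc p i) := by
    intro i hi
    have hne : xc p (i+1) - xc p i ≠ 0 := sub_ne_zero.mpr (hxlt i (i+1) (by omega) hi).ne'
    unfold sl
    field_simp
  have honL1 : ∀ i, yc p (2*i) = lc p i + sl p (2*i) * xc p (2*i) := by
    intro i; unfold lc; ring
  have honL2 : ∀ i, 2*i+1 < 2*m → yc p (2*i+1) = lc p i + sl p (2*i) * xc p (2*i+1) := by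
    intro i hi
    have h1 := hΔ (2*i) hi
    unfold lc
    linear_combination h1
  -- facts about the intersection points, for i + 1 < m
  have hD : ∀ i, i + 1 < m → 0 < sl p (2*i) - sl p (2*i+2) := by
    intro i hi
    have := hslt (2*i) (2*i+2) (by omega) (by omega)
    linarith
  have hXlb : ∀ i, i + 1 < m → xc p (2*i+1) < Xint p i := by
    intro i hi
    have hD' := hD i hi
    have hA : sl p (2*i+2) < sl p (2*i+1) := hslt (2*i+1) (2*i+2) (by omega) (by omega)
    have hxm : xc p (2*i+1) < xc p (2*i+2) := hxlt _ _ (by omega) (by omega)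
    have hmid := hΔ (2*i+1) (by omega)
    unfold Xint
    rw [lt_div_iff₀ hD']
    nlinarith [mul_pos (sub_pos.mpr hA) (sub_pos.mpr hxm)]
  have hXub : ∀ i, i + 1 < m → Xint p i < xc p (2*i+2) := by
    intro i hi
    have hD' := hD i hi
    have hB : sl p (2*i+1) < sl p (2*i) := hslt (2*i) (2*i+1) (by omega) (by omega)
    have hxm : xc p (2*i+1) < xc p (2*i+2) := hxlt _ _ (by omega) (by omega)
    have hmid := hΔ (2*i+1) (by omega)
    unfold Xint
    rw [div_lt_iff₀ hD']
    nlinarith [mul_pos (sub_pos.mpr hB) (sub_pos.mpr hxm)]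
  have hXint : ∀ i, i + 1 < m →
      lc p (i+1) + sl p (2*(i+1)) * Xint p i = lc p i + sl p (2*i) * Xint p i := by
    intro i hi
    have hD' : sl p (2*i) - sl p (2*i+2) ≠ 0 := (hD i hi).ne'
    have hlci : lc p i = yc p (2*i+1) - sl p (2*i) * xc p (2*i+1) := by
      have := honL2 i (by omega); linarith
    have e1 : 2*(i+1) = 2*i+2 := by ring
    rw [e1, hlci]
    unfold Xint lc
    rw [e1]
    field_simp
    ring
  -- endpoint facts
  have hleft : ∀ i, i < m →
      (vert p m i) 1 = lc p i + sl p (2*i) * (vert p m i) 0 ∧ (vert p m i) 0 ≤ xc p (2*i) := by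
    intro i hi
    by_cases h0 : i = 0
    · subst h0
      simp only [vert, if_pos rfl]
      constructor
      · have := honL1 0
        simpa [yc, xc] using this
      · simp [xc]
    · obtain ⟨j, rfl⟩ : ∃ j, i = j + 1 := ⟨i - 1, by omega⟩
      have hne : j + 1 ≠ m := by omega
      simp only [vert, if_neg h0, if_neg hne, Nat.add_sub_cancel]
      refine ⟨by simp, ?_⟩
      have := hXub j (by omega)
      have e1 : 2*(j+1) = 2*j+2 := by ring
      rw [e1]
      simpa using this.le
  have hright : ∀ i, i < m →
      (vert p m (i+1)) 1 = lc p i + sl p (2*i) * (vert p m (i+1)) 0 ∧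
        xc p (2*i+1) ≤ (vert p m (i+1)) 0 := by
    intro i hi
    by_cases hlast : i + 1 = m
    · have hne0 : i + 1 ≠ 0 := by omega
      simp only [vert, if_neg hne0, if_pos hlast]
      have e1 : 2*m - 1 = 2*i+1 := by omega
      rw [e1]
      exact ⟨honL2 i (by omega), le_refl _⟩
    · have hne0 : i + 1 ≠ 0 := by omega
      simp only [vert, if_neg hne0, if_neg hlast, Nat.add_sub_cancel]
      refine ⟨?_, by simpa using (hXlb i (by omega)).le⟩
      have := hXint i (by omega)
      simpa using this
  -- assemble
  refine ⟨fun i => vert p m (i : ℕ), ?_⟩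
  rintro q ⟨j, hj, rfl⟩
  set i := j / 2 with hidef
  have hi : i < m := by omega
  refine ⟨⟨i, hi⟩, ?_⟩
  have hseg : pathSeg (fun i => vert p m (i : ℕ)) ⟨i, hi⟩ =
      segment ℝ (vert p m i) (vert p m (i+1)) := by
    simp [pathSeg]
  rw [hseg]
  obtain ⟨hl1, hl2⟩ := hleft i hi
  obtain ⟨hr1, hr2⟩ := hright i hi
  have hx01 : xc p (2*i) < xc p (2*i+1) := hxlt _ _ (by omega) (by omega)
  have hj2 : j = 2*i ∨ j = 2*i+1 := by omega
  have hronL : yc p j = lc p i + sl p (2*i) * xc p j := by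
    rcases hj2 with h | h
    · rw [h]; exact honL1 i
    · rw [h]; exact honL2 i (by omega)
  have hrlb : xc p (2*i) ≤ xc p j := by
    rcases hj2 with h | h <;> rw [h]
    exact hx01.le
  have hrub : xc p j ≤ xc p (2*i+1) := by
    rcases hj2 with h | h <;> rw [h]
    exact hx01.le
  have hxc : xc p j = p j 0 := rfl
  exact mem_seg hl1 hr1 hronL (by linarith) (by linarith [hxc]) (by linarith [hxc])

def refl2 (q : Pt) : Pt := WithLp.toLp 2 (fun j : Fin 2 => if j = 1 then -(q 1) else q j)

@[simp] lemma refl2_zero (q : Pt) : refl2 q 0 = q 0 := rfl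
@[simp] lemma refl2_one (q : Pt) : refl2 q 1 = -(q 1) := rfl

lemma refl2_refl2 (q : Pt) : refl2 (refl2 q) = q := by
  ext j
  have hj : j = 0 ∨ j = 1 := by omega
  rcases hj with h | h <;> subst h <;> simp

lemma refl2_mem_segment {a b q : Pt} (h : q ∈ segment ℝ a b) :
    refl2 q ∈ segment ℝ (refl2 a) (refl2 b) := by
  obtain ⟨u, t, hu, htt, hut, heq⟩ := h
  refine ⟨u, t, hu, htt, hut, ?_⟩
  ext j
  have happ : ∀ (z z' : Pt) (jj : Fin 2), (u • z + t • z') jj = u * z jj + t * z' jj :=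
    fun _ _ _ => rfl
  have hq : ∀ jj : Fin 2, u * a jj + t * b jj = q jj := fun jj => by
    rw [← happ, heq]
  have hj : j = 0 ∨ j = 1 := by omega
  rcases hj with h | h <;> subst h <;> rw [happ]
  · simpa using hq 0
  · simp only [refl2_one]
    linear_combination -(hq 1)

lemma cup_refl {k : ℕ} {p : ℕ → Pt} (h : IsCup k p) : IsCap k (fun i => refl2 (p i)) := by
  obtain ⟨hx, hs⟩ := h
  constructor
  · intro i j hij hjk; simpa using hx i j hij hjk
  · intro i hi
    have h1 := hs i hi
    simp only [refl2_zero, refl2_one]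
    have e : ∀ a b d : ℝ, (-a - -b)/d = -((a-b)/d) := by intros; ring
    rw [e, e]
    exact neg_lt_neg h1

lemma cap_extend {k : ℕ} (hk : 2 ≤ k) {p : ℕ → Pt} (h : IsCap k p) :
    ∃ p' : ℕ → Pt, (∀ i < k, p' i = p i) ∧ IsCap (k+1) p' := by
  obtain ⟨hx, hs⟩ := h
  refine ⟨fun i => if i < k then p i else mk2 (p (k-1) 0 + 1) (p (k-1) 1 + sl p (k-2) - 1),
    fun i hi => if_pos hi, ?_, ?_⟩
  · intro i j hij hjk
    by_cases hjk' : j < k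
    · simp only [if_pos hjk', if_pos (lt_trans hij hjk')]; exact hx i j hij hjk'
    · have hj : j = k := by omega
      rw [hj]
      simp only [if_pos (show i < k by omega), if_neg (lt_irrefl k)]
      rw [mk2_zero]
      rcases eq_or_lt_of_le (show i ≤ k-1 by omega) with h | h
      · rw [h]; linarith
      · have := hx i (k-1) h (by omega); linarith
  · intro i hi
    by_cases hik : i + 2 < k
    · simp only [if_pos hik, if_pos (show i+1<k by omega), if_pos (show i<k by omega)]
      exact hs i hik
    · have hik2 : i + 2 = k := by omega
      simp only [if_neg (show ¬ i+2 < k by omega), if_pos (show i+1 < k by omega),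
        if_pos (show i < k by omega)]
      rw [mk2_zero, mk2_one, show i + 1 = k - 1 from by omega, show i = k - 2 from by omega]
      have hnum : p (k-1) 1 + sl p (k-2) - 1 - p (k-1) 1 = sl p (k-2) - 1 := by ring
      have hden : p (k-1) 0 + 1 - p (k-1) 0 = 1 := by ring
      rw [hnum, hden, div_one]
      have hsl : sl p (k-2) = (p (k-1) 1 - p (k-2) 1)/(p (k-1) 0 - p (k-2) 0) := by
        unfold sl xc yc; rw [show k - 2 + 1 = k - 1 from by omega]
      rw [← hsl]
      linarith

/-- A `k`-cap or `k`-cup admits a covering path with `⌈k/2⌉` segments. -/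
theorem stmt_2 (k : ℕ) (hk : 2 ≤ k) (p : ℕ → Pt)
    (hcc : IsCap k p ∨ IsCup k p) :
    ∃ v : Fin ((k + 1) / 2 + 1) → Pt,
      IsCoveringPath {q : Pt | ∃ i < k, q = p i} ((k + 1) / 2) v := by
  have main : ∀ p : ℕ → Pt, IsCap k p →
      ∃ v : Fin ((k+1)/2 + 1) → Pt, IsCoveringPath {q : Pt | ∃ i < k, q = p i} ((k+1)/2) v := by
    intro p hcap
    rcases Nat.even_or_odd k with ⟨t, ht⟩ | ⟨t, ht⟩
    · have hm : (k+1)/2 = t := by omega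
      have hcap' : IsCap (2*t) p := by rw [show 2*t = k by omega]; exact hcap
      obtain ⟨v, hv⟩ := cap_even t (by omega) p hcap'
      rw [hm]
      refine ⟨v, ?_⟩
      rintro q ⟨i, hi, rfl⟩
      exact hv (p i) ⟨i, by omega, rfl⟩
    · obtain ⟨p', hp'eq, hcap'⟩ := cap_extend hk hcap
      have hm : (k+1)/2 = t+1 := by omega
      have hcap'' : IsCap (2*(t+1)) p' := by rw [show 2*(t+1) = k+1 by omega]; exact hcap'
      obtain ⟨v, hv⟩ := cap_even (t+1) (by omega) p' hcap''
      rw [hm]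
      refine ⟨v, ?_⟩
      rintro q ⟨i, hi, rfl⟩
      exact hv (p i) ⟨i, by omega, (hp'eq i hi).symm⟩
  rcases hcc with hcap | hcup
  · exact main p hcap
  · obtain ⟨v, hv⟩ := main (fun i => refl2 (p i)) (cup_refl hcup)
    refine ⟨fun i => refl2 (v i), ?_⟩
    rintro q ⟨i, hi, rfl⟩
    obtain ⟨j, hj⟩ := hv (refl2 (p i)) ⟨i, hi, rfl⟩
    refine ⟨j, ?_⟩
    simp only [pathSeg] at hj ⊢
    have := refl2_mem_segment hj
    rwa [refl2_refl2] at this
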